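/- Let W be a module and Γ(x,a,y,b,z) := {ω ∈ W | ∃ α ∈ a, ∃ β ∈ b, ω + α ∈ z ∧ ω + α + β ∈ y ∧ ω + β ∈ x}. Then for fixed submodules a, b, the ternary product (x y z) := Γ(x,a,y,b,z) on the lattice of submodules of W satisfies the para-associative law: Γ(x,a,u,b,Γ(y,a,v,b,z)) = Γ(x,a,Γ(v,a,y,b,u),b,z) = Γ(Γ(x,a,u,b,y),a,v,b,z). -/
import Mathlib


/-- The quintary Grassmannian product:
`Γ(x,a,y,b,z) = {ω | ∃ α ∈ a, ∃ β ∈ b, ω + α ∈ z ∧ ω + α + β ∈ y ∧ ω + β ∈ x}`,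
as a submodule of `W`. -/
def Gamma {R : Type*} [Ring R] {W : Type*} [AddCommGroup W] [Module R W]
    (x a y b z : Submodule R W) : Submodule R W where
  carrier := {ω : W | ∃ α ∈ a, ∃ β ∈ b, ω + α ∈ z ∧ ω + α + β ∈ y ∧ ω + β ∈ x}
  zero_mem' := ⟨0, a.zero_mem, 0, b.zero_mem, by simp, by simp, by simp⟩
  add_mem' := by
    rintro ω ω' ⟨α, hα, β, hβ, h1, h2, h3⟩ ⟨α', hα', β', hβ', h1', h2', h3'⟩
    refine ⟨α + α', a.add_mem hα hα', β + β', b.add_mem hβ hβ', ?_, ?_, ?_⟩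
    · rw [show ω + ω' + (α + α') = (ω + α) + (ω' + α') by abel]
      exact z.add_mem h1 h1'
    · rw [show ω + ω' + (α + α') + (β + β') = (ω + α + β) + (ω' + α' + β') by abel]
      exact y.add_mem h2 h2'
    · rw [show ω + ω' + (β + β') = (ω + β) + (ω' + β') by abel]
      exact x.add_mem h3 h3'
  smul_mem' := by
    rintro c ω ⟨α, hα, β, hβ, h1, h2, h3⟩
    refine ⟨c • α, a.smul_mem c hα, c • β, b.smul_mem c hβ, ?_, ?_, ?_⟩
    · rw [← smul_add]; exact z.smul_mem c h1
    · rw [show c • ω + c • α + c • β = c • (ω + α + β) by rw [smul_add, smul_add]]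
      exact y.smul_mem c h2
    · rw [← smul_add]; exact x.smul_mem c h3

/-- For fixed `a, b`, the ternary product `(x y z) := Γ(x,a,y,b,z)` on the lattice of
submodules satisfies the para-associative law (semitorsor property). -/
theorem Gamma_semitorsor {R : Type*} [Ring R] {W : Type*} [AddCommGroup W]
    [Module R W] (a b x u y v z : Submodule R W) :
    Gamma x a u b (Gamma y a v b z) = Gamma x a (Gamma v a y b u) b z ∧
    Gamma x a (Gamma v a y b u) b z = Gamma (Gamma x a u b y) a v b z := by
  have key : ∀ (s : Submodule R W) (t k : W), t = k → k ∈ s → t ∈ s := by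
    rintro s t k rfl h; exact h
  constructor
  · ext ω
    constructor
    · rintro ⟨α, hα, β, hβ, ⟨α', hα', β', hβ', h1, h2, h3⟩, hu, hx⟩
      refine ⟨α + α', a.add_mem hα hα', β, hβ, key z _ _ (by abel) h1,
        ⟨-α', a.neg_mem hα', β' - β, b.sub_mem hβ' hβ,
          key u _ _ (by abel) hu, key y _ _ (by abel) h3, key v _ _ (by abel) h2⟩,
        hx⟩
    · rintro ⟨A, hA, B, hB, hz, ⟨α₂, hα₂, β₂, hβ₂, hu, hy, hv⟩, hx⟩
      exact ⟨A + α₂, a.add_mem hA hα₂, B, hB,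
        ⟨-α₂, a.neg_mem hα₂, B + β₂, b.add_mem hB hβ₂,
          key z _ _ (by abel) hz, key v _ _ (by abel) hv, key y _ _ (by abel) hy⟩,
        key u _ _ (by abel) hu, hx⟩
  · ext ω
    constructor
    · rintro ⟨A, hA, B, hB, hz, ⟨α₂, hα₂, β₂, hβ₂, hu, hy, hv⟩, hx⟩
      exact ⟨A, hA, B + β₂, b.add_mem hB hβ₂, hz, key v _ _ (by abel) hv,
        ⟨A + α₂, a.add_mem hA hα₂, -β₂, b.neg_mem hβ₂,
          key y _ _ (by abel) hy, key u _ _ (by abel) hu, key x _ _ (by abel) hx⟩⟩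
    · rintro ⟨α, hα, β, hβ, hz, hv, ⟨α₃, hα₃, β₃, hβ₃, hy, hu, hx⟩⟩
      exact ⟨α, hα, β + β₃, b.add_mem hβ hβ₃, hz,
        ⟨α₃ - α, a.sub_mem hα₃ hα, -β₃, b.neg_mem hβ₃,
          key u _ _ (by abel) hu, key y _ _ (by abel) hy, key v _ _ (by abel) hv⟩,
        key x _ _ (by abel) hx⟩
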